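/- Let k be a field, V a finite-dimensional k-vector space, π : V* → V a skew-symmetric linear map, and ψ an alternating trilinear form on V. If ψ(π α, π β, π γ) = 0 for all α, β, γ ∈ V* (i.e., (∧³π♯)ψ = 0), then for every α ∈ V* the endomorphism Ψ_α of V* satisfies Ψ_α ∘ Ψ_α = 0; consequently Tr(Ψ_α) = 0 for every α, and the vector π ξ vanishes, where ξ ∈ V* is defined by ξ(X) = Σ_i ψ(π ε^i, e_i, X) for any basis (e_i) with dual basis (ε^i). (This is the claim of the paper's Example 1 that (∧³π♯)ψ = 0 implies Y_{π,ψ} = 0.) -/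

import Mathlib

/-- The linear form `ξ(X) = Σ_i ψ(π εⁱ, e_i, X)` associated to a basis `(e_i)` with dual
basis `(εⁱ)`; it is the contraction `i_π ψ` (up to normalization). -/
noncomputable def xiForm {k V ι : Type*} [Field k] [AddCommGroup V] [Module k V] [Fintype ι]
    (π : Module.Dual k V →ₗ[k] V) (ψ : V →ₗ[k] V →ₗ[k] V →ₗ[k] k)
    (b : Module.Basis ι k V) : Module.Dual k V :=
  ∑ i, ψ (π (b.coord i)) (b i)

/-- The endomorphism `Ψ_α` of `V*` defined by `(Ψ_α β)(X) = ψ(π α, π β, X)`. -/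
noncomputable def PsiEndo {k V : Type*} [Field k] [AddCommGroup V] [Module k V]
    (π : Module.Dual k V →ₗ[k] V) (ψ : V →ₗ[k] V →ₗ[k] V →ₗ[k] k)
    (α : Module.Dual k V) : Module.Dual k V →ₗ[k] Module.Dual k V :=
  (ψ (π α)) ∘ₗ π

/-- If `(∧³π♯)ψ = 0`, then each `Ψ_α` squares to zero, has trace zero, and the vector
`π ξ` vanishes for any choice of basis. -/
theorem Y_vanishes_of_triple_contraction_zero {k V : Type*} [Field k] [AddCommGroup V]
    [Module k V] [FiniteDimensional k V]
    (π : Module.Dual k V →ₗ[k] V)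
    (hπ : ∀ α β : Module.Dual k V, α (π β) = - β (π α))
    (ψ : V →ₗ[k] V →ₗ[k] V →ₗ[k] k)
    (hψ₁ : ∀ X Y : V, ψ X X Y = 0)
    (hψ₂ : ∀ X Y : V, ψ X Y Y = 0)
    (hψ₃ : ∀ X Y : V, ψ X Y X = 0)
    (h0 : ∀ α β γ : Module.Dual k V, ψ (π α) (π β) (π γ) = 0) :
    (∀ α : Module.Dual k V, PsiEndo π ψ α ∘ₗ PsiEndo π ψ α = 0)
    ∧ (∀ α : Module.Dual k V,
        LinearMap.trace k (Module.Dual k V) (PsiEndo π ψ α) = 0)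
    ∧ (∀ (ι : Type) [Fintype ι], ∀ b : Module.Basis ι k V, π (xiForm π ψ b) = 0) := by

  classical
  -- any dual form annihilating the range of π lies in the kernel of π
  have hker : ∀ δ : Module.Dual k V, (∀ ε : Module.Dual k V, δ (π ε) = 0) → π δ = 0 := by
    intro δ h
    rw [← Module.forall_dual_apply_eq_zero_iff k]
    intro ε
    rw [hπ ε δ, h ε, neg_zero]
  have hswap12 : ∀ X Y Z : V, ψ X Y Z = - ψ Y X Z := by
    intro X Y Z
    have h := hψ₁ (X + Y) Z
    simp only [map_add, LinearMap.add_apply, hψ₁, zero_add, add_zero] at h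
    linear_combination h
  have hswap23 : ∀ X Y Z : V, ψ X Y Z = - ψ X Z Y := by
    intro X Y Z
    have h := hψ₂ X (Y + Z)
    simp only [map_add, LinearMap.add_apply, hψ₂, zero_add, add_zero] at h
    linear_combination h
  have hcyc : ∀ X Y Z : V, ψ X Y Z = ψ Z X Y := by
    intro X Y Z
    rw [hswap12, hswap23 Y X Z, neg_neg, hswap12, hswap23 Z X Y]
  have hz : ∀ α β : Module.Dual k V, π (ψ (π α) (π β)) = 0 := by
    intro α β
    exact hker _ (fun ε => h0 α β ε)
  have hsq : ∀ α : Module.Dual k V, PsiEndo π ψ α ∘ₗ PsiEndo π ψ α = 0 := by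
    intro α
    ext β
    simp [PsiEndo, hz α β]
  refine ⟨hsq, ?_, ?_⟩
  · intro α
    have hnil : IsNilpotent (PsiEndo π ψ α) := ⟨2, by rw [pow_two, Module.End.mul_eq_comp, hsq]⟩
    exact (LinearMap.isNilpotent_trace_of_isNilpotent hnil).eq_zero
  · intro ι _ b
    apply hker
    intro α
    have htr : LinearMap.trace k (Module.Dual k V) (PsiEndo π ψ α) = 0 := by
      have hnil : IsNilpotent (PsiEndo π ψ α) := ⟨2, by rw [pow_two, Module.End.mul_eq_comp, hsq]⟩
      exact (LinearMap.isNilpotent_trace_of_isNilpotent hnil).eq_zero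
    have hform : LinearMap.trace k (Module.Dual k V) (PsiEndo π ψ α)
        = ∑ i, (PsiEndo π ψ α (b.dualBasis i)) (b i) := by
      rw [LinearMap.trace_eq_matrix_trace k b.dualBasis, Matrix.trace]
      apply Finset.sum_congr rfl
      intro i _
      rw [Matrix.diag_apply, LinearMap.toMatrix_apply, Module.Basis.dualBasis_repr]
    have hx : (xiForm π ψ b) (π α) = ∑ i, (PsiEndo π ψ α (b.dualBasis i)) (b i) := by
      rw [xiForm]
      simp only [LinearMap.sum_apply]
      apply Finset.sum_congr rfl
      intro i _
      have hdb : (b.dualBasis i : Module.Dual k V) = b.coord i := by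
        ext v
        simp [Module.Basis.dualBasis_apply, Module.Basis.coord_apply]
      rw [hdb]
      simp only [PsiEndo, LinearMap.comp_apply]
      exact hcyc _ _ _
    rw [hx, ← hform, htr]
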